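/- Let a > 0 and let μ be a finite positive Borel measure on ℝ such that L(μ)(t) = ∫_ℝ e^{−λt} dμ(λ) is finite for all t ∈ [0,a], and set φ(t) := L(μ)(|t|) for |t| ≤ a. If L(μ)(a) ≤ L(μ)(t) for all t ∈ [0,a] (equivalently, for the convex function L(μ), the left derivative L(μ)′(a−) ≤ 0), then φ is reflection positive on [−a,a] and extends to a symmetric positive definite function on all of ℝ. -/

import Mathlib

open MeasureTheory Real Filter Topology

/-- A kernel `K` on a subset `S` is positive definite if all quadratic forms built
from finitely many points of `S` are nonnegative. -/
def PosDefKernel {α : Type*} (S : Set α) (K : α → α → ℝ) : Prop :=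
  ∀ (n : ℕ) (x : Fin n → α), (∀ i, x i ∈ S) →
    ∀ c : Fin n → ℝ, 0 ≤ ∑ i, ∑ j, c i * c j * K (x i) (x j)

/-- A function `φ` is reflection positive on `[-a,a]` if both kernels
`(s,t) ↦ φ((t-s)/2)` on `[-a,a]` and `(s,t) ↦ φ((t+s)/2)` on `(0,a)` are
positive definite. -/
def ReflectionPositive (a : ℝ) (φ : ℝ → ℝ) : Prop :=
  PosDefKernel (Set.Icc (-a) a) (fun s t => φ ((t - s) / 2)) ∧
  PosDefKernel (Set.Ioo 0 a) (fun s t => φ ((t + s) / 2))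

lemma tri_aux (s p q : ℝ) :
    ((volume (Set.Icc p (p+s) ∩ Set.Icc q (q+s))).toReal) = max (s - |p - q|) 0 := by
  rw [Set.Icc_inter_Icc, Real.volume_Icc, ENNReal.toReal_ofReal']
  congr 1
  rw [abs_sub_comm, ← max_sub_min_eq_abs, min_add_add_right]
  ring

lemma tri_posdef (s : ℝ) (_hs : 0 ≤ s) (n : ℕ) (x c : Fin n → ℝ) :
    0 ≤ ∑ i, ∑ j, c i * c j * max (s - |x i - x j|) 0 := by
  classical
  set u : Fin n → ℝ → ℝ := fun i => (Set.Icc (x i) (x i + s)).indicator 1 with hu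
  have hint : ∀ i j : Fin n, Integrable (fun y => c i * c j * (u i y * u j y)) volume := by
    intro i j
    apply Integrable.const_mul
    have : (fun y => u i y * u j y)
        = (Set.Icc (x i) (x i + s) ∩ Set.Icc (x j) (x j + s)).indicator 1 := by
      rw [Set.inter_indicator_one]; rfl
    rw [this]
    rw [integrable_indicator_iff (measurableSet_Icc.inter measurableSet_Icc)]
    exact integrableOn_const (by
      rw [Set.Icc_inter_Icc, Real.volume_Icc]; exact ENNReal.ofReal_ne_top)
  have key : ∀ i j : Fin n, (∫ y, u i y * u j y) = max (s - |x i - x j|) 0 := by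
    intro i j
    have : (fun y => u i y * u j y)
        = (Set.Icc (x i) (x i + s) ∩ Set.Icc (x j) (x j + s)).indicator 1 := by
      rw [Set.inter_indicator_one]; rfl
    rw [this, integral_indicator_one (measurableSet_Icc.inter measurableSet_Icc), measureReal_def, tri_aux]
  have expand : (∫ y, (∑ i, c i * u i y)^2)
      = ∑ i, ∑ j, c i * c j * ∫ y, u i y * u j y := by
    have : ∀ y : ℝ, (∑ i, c i * u i y)^2 = ∑ i, ∑ j, c i * c j * (u i y * u j y) := by
      intro y
      rw [sq, Finset.sum_mul_sum]
      apply Finset.sum_congr rfl; intro i _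
      apply Finset.sum_congr rfl; intro j _
      ring
    simp_rw [this]
    rw [integral_finset_sum _ (fun i _ => integrable_finset_sum _ (fun j _ => hint i j))]
    apply Finset.sum_congr rfl; intro i _
    rw [integral_finset_sum _ (fun j _ => hint i j)]
    apply Finset.sum_congr rfl; intro j _
    exact integral_const_mul _ _
  calc (0:ℝ) ≤ ∫ y, (∑ i, c i * u i y)^2 := integral_nonneg (fun y => sq_nonneg _)
    _ = _ := by rw [expand]; simp_rw [key]

lemma cont1 (l b : ℝ) : Continuous fun s : ℝ => l^2 * Real.exp (-l * s) * max (s - b) 0 :=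
  (continuous_const.mul ((continuous_const.mul continuous_id).rexp)).mul
    ((continuous_id.sub continuous_const).max continuous_const)

lemma antideriv_id (l u : ℝ) (t : ℝ) :
    HasDerivAt (fun s : ℝ => -Real.exp (-l * s) * (l * (s - u) + 1))
      (l^2 * Real.exp (-l * t) * (t - u)) t := by
  have h1 : HasDerivAt (fun s : ℝ => Real.exp (-l * s)) (-l * Real.exp (-l * t)) t := by
    have := ((hasDerivAt_id t).const_mul (-l)).exp
    simpa [mul_comm] using this
  have h2 : HasDerivAt (fun s : ℝ => l * (s - u) + 1) l t := by
    simpa using (((hasDerivAt_id t).sub_const u).const_mul l).add_const 1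
  have := (h1.fun_neg.fun_mul h2)
  exact this.congr_deriv (by ring)

lemma integral_B (l a : ℝ) (u : ℝ) :
    ∫ s in u..a, l^2 * Real.exp (-l * s) * (s - u)
      = Real.exp (-l * u) - Real.exp (-l * a) - l * Real.exp (-l * a) * (a - u) := by
  rw [intervalIntegral.integral_eq_sub_of_hasDerivAt (fun t _ => antideriv_id l u t)]
  · simp; ring
  · apply Continuous.intervalIntegrable
    exact (continuous_const.mul ((continuous_const.mul continuous_id).rexp)).mul
      (continuous_id.sub continuous_const)

lemma identityB (l a t : ℝ) (ha : 0 < a) :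
    Real.exp (-l * a) + l * Real.exp (-l * a) * max (a - |t|) 0
      + (∫ s in (0:ℝ)..a, l^2 * Real.exp (-l * s) * max (s - |t|) 0)
      = Real.exp (-l * min |t| a) := by
  rcases le_or_gt |t| a with hta | hta
  · have hmin : min |t| a = |t| := min_eq_left hta
    have hmax : max (a - |t|) 0 = a - |t| := max_eq_left (by linarith)
    have habs : 0 ≤ |t| := abs_nonneg t
    have hsplit : (∫ s in (0:ℝ)..a, l^2 * Real.exp (-l * s) * max (s - |t|) 0)
        = (∫ s in (0:ℝ)..(|t|), l^2 * Real.exp (-l * s) * max (s - |t|) 0)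
        + (∫ s in (|t|)..a, l^2 * Real.exp (-l * s) * max (s - |t|) 0) :=
      (intervalIntegral.integral_add_adjacent_intervals ((cont1 l |t|).intervalIntegrable _ _)
        ((cont1 l |t|).intervalIntegrable _ _)).symm
    have h1 : (∫ s in (0:ℝ)..(|t|), l^2 * Real.exp (-l * s) * max (s - |t|) 0) = 0 := by
      have heq : (∫ s in (0:ℝ)..(|t|), l^2 * Real.exp (-l * s) * max (s - |t|) 0)
          = ∫ s in (0:ℝ)..(|t|), (0:ℝ) := by
        apply intervalIntegral.integral_congr
        intro s hs
        rw [Set.uIcc_of_le habs] at hs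
        have h0 : max (s - |t|) 0 = 0 := max_eq_right (by linarith [hs.2])
        simp [h0]
      rw [heq, intervalIntegral.integral_zero]
    have h2 : (∫ s in (|t|)..a, l^2 * Real.exp (-l * s) * max (s - |t|) 0)
        = ∫ s in (|t|)..a, l^2 * Real.exp (-l * s) * (s - |t|) := by
      apply intervalIntegral.integral_congr
      intro s hs
      rw [Set.uIcc_of_le hta] at hs
      have h0 : max (s - |t|) 0 = s - |t| := max_eq_left (by linarith [hs.1])
      simp [h0]
    rw [hmin, hmax, hsplit, h1, h2, integral_B]
    ring
  · have hmin : min |t| a = a := min_eq_right hta.le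
    have hmax : max (a - |t|) 0 = 0 := max_eq_right (by linarith)
    have h1 : (∫ s in (0:ℝ)..a, l^2 * Real.exp (-l * s) * max (s - |t|) 0) = 0 := by
      have heq : (∫ s in (0:ℝ)..a, l^2 * Real.exp (-l * s) * max (s - |t|) 0)
          = ∫ s in (0:ℝ)..a, (0:ℝ) := by
        apply intervalIntegral.integral_congr
        intro s hs
        rw [Set.uIcc_of_le ha.le] at hs
        have h0 : max (s - |t|) 0 = 0 := max_eq_right (by linarith [hs.2])
        simp [h0]
      rw [heq, intervalIntegral.integral_zero]
    rw [hmin, hmax, h1]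
    ring

lemma pointwiseC (a : ℝ) (ha : 0 < a) (l : ℝ) (n : ℕ) (x c : Fin n → ℝ) :
    Real.exp (-l * a) * (∑ i, c i)^2
      + l * Real.exp (-l * a) * (∑ i, ∑ j, c i * c j * max (a - |x i - x j|) 0)
      ≤ ∑ i, ∑ j, c i * c j * Real.exp (-l * min (|x i - x j|) a) := by
  have hterm : ∀ i j : Fin n,
      c i * c j * Real.exp (-l * min (|x i - x j|) a)
        = c i * c j * Real.exp (-l * a)
          + l * Real.exp (-l * a) * (c i * c j * max (a - |x i - x j|) 0)
          + ∫ s in (0:ℝ)..a, c i * c j * (l^2 * Real.exp (-l * s) * max (s - |x i - x j|) 0) := by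
    intro i j
    rw [intervalIntegral.integral_const_mul, ← identityB l a (x i - x j) ha]
    ring
  have hsum : (∑ i, ∑ j, c i * c j * Real.exp (-l * min (|x i - x j|) a))
      = Real.exp (-l * a) * (∑ i, c i)^2
        + l * Real.exp (-l * a) * (∑ i, ∑ j, c i * c j * max (a - |x i - x j|) 0)
        + ∫ s in (0:ℝ)..a, ∑ i, ∑ j,
            c i * c j * (l^2 * Real.exp (-l * s) * max (s - |x i - x j|) 0) := by
    simp_rw [hterm, Finset.sum_add_distrib]
    congr 1
    · congr 1
      · rw [sq, Finset.sum_mul_sum, Finset.mul_sum]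
        apply Finset.sum_congr rfl; intro i _
        rw [Finset.mul_sum]
        apply Finset.sum_congr rfl; intro j _
        ring
      · rw [Finset.mul_sum]
        apply Finset.sum_congr rfl; intro i _
        rw [Finset.mul_sum]
    · rw [intervalIntegral.integral_finset_sum
        (f := fun i s => ∑ j, c i * c j * (l^2 * Real.exp (-l * s) * max (s - |x i - x j|) 0)) (fun i _ =>
        Continuous.intervalIntegrable (continuous_finset_sum _
          (fun j _ => continuous_const.mul (cont1 l _))) 0 a)]
      apply Finset.sum_congr rfl; intro i _
      rw [intervalIntegral.integral_finset_sum
        (f := fun j s => c i * c j * (l^2 * Real.exp (-l * s) * max (s - |x i - x j|) 0)) (fun j _ =>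
        Continuous.intervalIntegrable (continuous_const.mul (cont1 l _)) 0 a)]
  rw [hsum]
  apply le_add_of_nonneg_right
  apply intervalIntegral.integral_nonneg ha.le
  intro s hs
  have hre : ∑ i, ∑ j, c i * c j * (l^2 * Real.exp (-l * s) * max (s - |x i - x j|) 0)
      = (l^2 * Real.exp (-l * s)) * ∑ i, ∑ j, c i * c j * max (s - |x i - x j|) 0 := by
    rw [Finset.mul_sum]
    apply Finset.sum_congr rfl; intro i _
    rw [Finset.mul_sum]
    apply Finset.sum_congr rfl; intro j _
    ring
  rw [hre]
  exact mul_nonneg (mul_nonneg (sq_nonneg l) (exp_pos _).le) (tri_posdef s hs.1 n x c)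

lemma secant_mono_exp (l : ℝ) {h H : ℝ} (h0 : 0 < h) (hH : h ≤ H) :
    (Real.exp (l * h) - 1) / h ≤ (Real.exp (l * H) - 1) / H := by
  have hH0 : 0 < H := lt_of_lt_of_le h0 hH
  rcases lt_trichotomy l 0 with hl | hl | hl
  · have hxy : l * H ≤ l * h := mul_le_mul_of_nonpos_left hH hl.le
    have key := convexOn_exp.secant_mono (Set.mem_univ (0:ℝ)) (Set.mem_univ (l*H))
      (Set.mem_univ (l*h)) (mul_ne_zero hl.ne hH0.ne') (mul_ne_zero hl.ne h0.ne') hxy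
    simp only [Real.exp_zero, sub_zero] at key
    have key2 := mul_le_mul_of_nonpos_left key hl.le
    calc (Real.exp (l * h) - 1) / h
        = l * ((Real.exp (l * h) - 1) / (l * h)) := by
          rw [mul_div_assoc', mul_div_mul_left _ _ hl.ne]
      _ ≤ l * ((Real.exp (l * H) - 1) / (l * H)) := key2
      _ = (Real.exp (l * H) - 1) / H := by
          rw [mul_div_assoc', mul_div_mul_left _ _ hl.ne]
  · simp [hl]
  · have hxy : l * h ≤ l * H := mul_le_mul_of_nonneg_left hH hl.le
    have key := convexOn_exp.secant_mono (Set.mem_univ (0:ℝ)) (Set.mem_univ (l*h))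
      (Set.mem_univ (l*H)) (mul_ne_zero hl.ne' h0.ne') (mul_ne_zero hl.ne' hH0.ne') hxy
    simp only [Real.exp_zero, sub_zero] at key
    have key2 := mul_le_mul_of_nonneg_left key hl.le
    calc (Real.exp (l * h) - 1) / h
        = l * ((Real.exp (l * h) - 1) / (l * h)) := by
          rw [mul_div_assoc', mul_div_mul_left _ _ hl.ne']
      _ ≤ l * ((Real.exp (l * H) - 1) / (l * H)) := key2
      _ = (Real.exp (l * H) - 1) / H := by
          rw [mul_div_assoc', mul_div_mul_left _ _ hl.ne']

lemma lower_secant_exp (l : ℝ) {h : ℝ} (h0 : 0 < h) :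
    l ≤ (Real.exp (l * h) - 1) / h := by
  rw [le_div_iff₀ h0]
  have := Real.add_one_le_exp (l * h)
  linarith

lemma lemD (a : ℝ) (ha : 0 < a) (μ : Measure ℝ) [IsFiniteMeasure μ]
    (hint : ∀ t ∈ Set.Icc (0 : ℝ) a, Integrable (fun l => Real.exp (-l * t)) μ)
    (hmin : ∀ t ∈ Set.Icc (0 : ℝ) a,
      (∫ l, Real.exp (-l * a) ∂μ) ≤ ∫ l, Real.exp (-l * t) ∂μ) :
    Integrable (fun l => l * Real.exp (-l * a)) μ ∧
      0 ≤ ∫ l, l * Real.exp (-l * a) ∂μ := by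
  have hamem : a ∈ Set.Icc (0:ℝ) a := ⟨ha.le, le_refl a⟩
  set h : ℕ → ℝ := fun n => a / (n + 1) with hh_def
  have hh0 : ∀ n, 0 < h n := fun n => div_pos ha (by positivity)
  have hha : ∀ n, h n ≤ a := fun n => div_le_self ha.le (by norm_num)
  set t : ℕ → ℝ := fun n => a - h n with ht_def
  have hts : ∀ n, t n = a - h n := fun n => by rw [ht_def]
  have htmem : ∀ n, t n ∈ Set.Icc (0:ℝ) a :=
    fun n => ⟨by rw [hts n]; linarith [hha n], by rw [hts n]; linarith [hh0 n]⟩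
  set q : ℕ → ℝ → ℝ := fun n l => (Real.exp (-l * t n) - Real.exp (-l * a)) / h n with hq_def
  have hqalt : ∀ n l, q n l = Real.exp (-l * a) * ((Real.exp (l * h n) - 1) / h n) := by
    intro n l
    have he : Real.exp (-l * t n) = Real.exp (-l * a) * Real.exp (l * h n) := by
      rw [← Real.exp_add, hts n]; congr 1; ring
    simp only [hq_def]
    rw [he]; ring
  set q0 : ℝ → ℝ := fun l => Real.exp (-l * a) * ((Real.exp (l * a) - 1) / a) with hq0_def
  have hq0alt : ∀ l, q0 l = (1 - Real.exp (-l * a)) / a := by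
    intro l
    have he1 : Real.exp (-l * a) * Real.exp (l * a) = 1 := by
      rw [← Real.exp_add]; simp
    simp only [hq0_def]
    linear_combination (1/a) * he1
  -- pointwise bounds
  have hub : ∀ n l, q n l ≤ q0 l := by
    intro n l
    rw [hqalt, hq0_def]
    exact mul_le_mul_of_nonneg_left (secant_mono_exp l (hh0 n) (hha n)) (Real.exp_pos _).le
  have hlb : ∀ l, l * Real.exp (-l * a) ≤ q0 l := by
    intro l
    simp only [hq0_def]
    rw [mul_comm l (Real.exp (-l * a))]
    exact mul_le_mul_of_nonneg_left (lower_secant_exp l ha) (Real.exp_pos _).le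
  set D : ℝ → ℝ := fun l => q0 l - l * Real.exp (-l * a) with hD_def
  set Dn : ℕ → ℝ → ℝ := fun n l => q0 l - q n l with hDn_def
  have hDnn : ∀ l, 0 ≤ D l := fun l => sub_nonneg.2 (hlb l)
  have hDnnn : ∀ n l, 0 ≤ Dn n l := fun n l => sub_nonneg.2 (hub n l)
  -- convergence
  have htend : ∀ l, Tendsto (fun n => q n l) atTop (𝓝 (l * Real.exp (-l * a))) := by
    intro l
    have hd : HasDerivAt (fun y : ℝ => Real.exp (l * y)) l 0 := by
      have := ((hasDerivAt_id (0:ℝ)).const_mul l).exp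
      simpa using this
    have hslope := hasDerivAt_iff_tendsto_slope.1 hd
    have hhto : Tendsto (fun n : ℕ => h n) atTop (𝓝 0) := by
      apply Tendsto.div_atTop (tendsto_const_nhds (x := a))
      exact tendsto_atTop_add_const_right _ 1 tendsto_natCast_atTop_atTop
    have hto' : Tendsto (fun n : ℕ => h n) atTop (𝓝[≠] (0:ℝ)) :=
      tendsto_nhdsWithin_of_tendsto_nhds_of_eventually_within _ hhto
        (Eventually.of_forall (fun n => (hh0 n).ne'))
    have hcomp := hslope.comp hto'
    have hkey : Tendsto (fun n => (Real.exp (l * h n) - 1) / h n) atTop (𝓝 l) := by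
      convert hcomp using 2 with n
      simp [slope, Real.exp_zero, div_eq_inv_mul]
    have hfin := hkey.const_mul (Real.exp (-l * a))
    have heq : (fun n => q n l) = fun n => Real.exp (-l * a) * ((Real.exp (l * h n) - 1) / h n) := by
      funext n; exact hqalt n l
    rw [heq]
    convert hfin using 2
    ring
  have htendD : ∀ l, Tendsto (fun n => Dn n l) atTop (𝓝 (D l)) := fun l =>
    tendsto_const_nhds.sub (htend l)
  -- integrability
  have hiq : ∀ n, Integrable (q n) μ := by
    intro n
    simp only [hq_def]
    exact ((hint (t n) (htmem n)).sub (hint a hamem)).div_const _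
  have hiq0 : Integrable q0 μ := by
    have h1 : Integrable (fun l => (1 - Real.exp (-l * a)) / a) μ :=
      ((integrable_const 1).sub (hint a hamem)).div_const _
    exact h1.congr (Eventually.of_forall (fun l => (hq0alt l).symm))
  have hiDn : ∀ n, Integrable (Dn n) μ := fun n => hiq0.sub (hiq n)
  -- continuity
  have hcont_exp : ∀ s : ℝ, Continuous fun l : ℝ => Real.exp (-l * s) :=
    fun s => (continuous_neg.mul continuous_const).rexp
  have hcontq0 : Continuous q0 := by
    simp only [hq0_def]
    exact (hcont_exp a).mul ((((continuous_id'.mul continuous_const).rexp).sub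
      continuous_const).div_const _)
  have hcontD : Continuous D := by
    simp only [hD_def]
    exact hcontq0.sub (continuous_id'.mul (hcont_exp a))
  have hcontDn : ∀ n, Continuous (Dn n) := by
    intro n
    simp only [hDn_def]
    apply hcontq0.sub
    simp only [hq_def]
    exact ((hcont_exp (t n)).sub (hcont_exp a)).div_const _
  -- integral bounds
  have hqnn : ∀ n, 0 ≤ ∫ l, q n l ∂μ := by
    intro n
    simp only [hq_def]
    rw [integral_div]
    apply div_nonneg _ (hh0 n).le
    rw [integral_sub (hint (t n) (htmem n)) (hint a hamem)]
    linarith [hmin (t n) (htmem n)]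
  set K : ℝ := ∫ l, q0 l ∂μ with hK_def
  have hK0 : 0 ≤ K := by
    have heq : K = ((∫ l, (1:ℝ) ∂μ) - ∫ l, Real.exp (-l * a) ∂μ) / a := by
      rw [hK_def, integral_congr_ae (Eventually.of_forall (fun l => hq0alt l)),
        integral_div, integral_sub (integrable_const 1) (hint a hamem)]
    rw [heq]
    apply div_nonneg _ ha.le
    have h1 := hmin 0 ⟨le_refl 0, ha.le⟩
    have h2 : (∫ l, Real.exp (-l * 0) ∂μ) = ∫ l, (1:ℝ) ∂μ := by
      apply integral_congr_ae; filter_upwards with l; simp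
    rw [h2] at h1
    linarith
  have hDnK : ∀ n, (∫ l, Dn n l ∂μ) ≤ K := by
    intro n
    simp only [hDn_def]
    rw [integral_sub hiq0 (hiq n)]
    have := hqnn n
    rw [hK_def]
    linarith
  -- Fatou
  have hmeas : ∀ n, Measurable fun l => ENNReal.ofReal (Dn n l) :=
    fun n => ENNReal.measurable_ofReal.comp (hcontDn n).measurable
  have hfatou := lintegral_liminf_le hmeas (μ := μ) (u := atTop)
  have hliminf_eq : (∫⁻ l, liminf (fun n => ENNReal.ofReal (Dn n l)) atTop ∂μ)
      = ∫⁻ l, ENNReal.ofReal (D l) ∂μ := by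
    apply lintegral_congr
    intro l
    exact ((ENNReal.continuous_ofReal.tendsto _).comp (htendD l)).liminf_eq
  have hlin_le : ∀ n, (∫⁻ l, ENNReal.ofReal (Dn n l) ∂μ) ≤ ENNReal.ofReal K := by
    intro n
    rw [← ofReal_integral_eq_lintegral_ofReal (hiDn n) (Eventually.of_forall (hDnnn n))]
    exact ENNReal.ofReal_le_ofReal (hDnK n)
  have hliminf_le : liminf (fun n => ∫⁻ l, ENNReal.ofReal (Dn n l) ∂μ) atTop
      ≤ ENNReal.ofReal K := by
    calc liminf (fun n => ∫⁻ l, ENNReal.ofReal (Dn n l) ∂μ) atTop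
        ≤ liminf (fun _ : ℕ => ENNReal.ofReal K) atTop :=
          liminf_le_liminf (Eventually.of_forall hlin_le)
      _ = ENNReal.ofReal K := liminf_const _
  have hfin : (∫⁻ l, ENNReal.ofReal (D l) ∂μ) ≤ ENNReal.ofReal K := by
    rw [← hliminf_eq]
    exact le_trans hfatou hliminf_le
  have hiD : Integrable D μ := by
    refine ⟨hcontD.aestronglyMeasurable, ?_⟩
    rw [hasFiniteIntegral_iff_ofReal (Eventually.of_forall hDnn)]
    exact lt_of_le_of_lt hfin ENNReal.ofReal_lt_top
  have hiT : Integrable (fun l => l * Real.exp (-l * a)) μ := by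
    have heq : (fun l => l * Real.exp (-l * a)) = fun l => q0 l - D l := by
      funext l; simp only [hD_def]; ring
    rw [heq]
    exact hiq0.sub hiD
  refine ⟨hiT, ?_⟩
  have hintD_le : (∫ l, D l ∂μ) ≤ K := by
    rw [integral_eq_lintegral_of_nonneg_ae (Eventually.of_forall hDnn)
      hcontD.aestronglyMeasurable]
    calc (∫⁻ l, ENNReal.ofReal (D l) ∂μ).toReal
        ≤ (ENNReal.ofReal K).toReal := ENNReal.toReal_mono ENNReal.ofReal_ne_top hfin
      _ = K := ENNReal.toReal_ofReal hK0
  have hsplit : (∫ l, l * Real.exp (-l * a) ∂μ) = K - ∫ l, D l ∂μ := by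
    rw [hK_def, ← integral_sub hiq0 hiD]
    apply integral_congr_ae
    filter_upwards with l
    simp only [hD_def]
    ring
  rw [hsplit]
  linarith

lemma gPD (a : ℝ) (ha : 0 < a) (μ : Measure ℝ) [IsFiniteMeasure μ]
    (hint : ∀ t ∈ Set.Icc (0 : ℝ) a, Integrable (fun l => Real.exp (-l * t)) μ)
    (hmin : ∀ t ∈ Set.Icc (0 : ℝ) a,
      (∫ l, Real.exp (-l * a) ∂μ) ≤ ∫ l, Real.exp (-l * t) ∂μ)
    (n : ℕ) (x c : Fin n → ℝ) :
    0 ≤ ∑ i, ∑ j, c i * c j * ∫ l, Real.exp (-l * min (|x i - x j|) a) ∂μ := by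
  have hInt : ∀ i j : Fin n, Integrable (fun l => Real.exp (-l * min (|x i - x j|) a)) μ :=
    fun i j => hint _ ⟨le_min (abs_nonneg _) ha.le, min_le_right _ _⟩
  have hswap : (∑ i, ∑ j, c i * c j * ∫ l, Real.exp (-l * min (|x i - x j|) a) ∂μ)
      = ∫ l, ∑ i, ∑ j, c i * c j * Real.exp (-l * min (|x i - x j|) a) ∂μ := by
    rw [integral_finset_sum _ (fun i _ => integrable_finset_sum _
      (fun j _ => (hInt i j).const_mul _))]
    apply Finset.sum_congr rfl; intro i _
    rw [integral_finset_sum _ (fun j _ => (hInt i j).const_mul _)]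
    apply Finset.sum_congr rfl; intro j _
    rw [integral_const_mul]
  obtain ⟨hiC, hC0⟩ := lemD a ha μ hint hmin
  have hamem : a ∈ Set.Icc (0:ℝ) a := ⟨ha.le, le_refl a⟩
  have hintf : Integrable (fun l => Real.exp (-l * a) * (∑ i, c i)^2
      + l * Real.exp (-l * a) * (∑ i, ∑ j, c i * c j * max (a - |x i - x j|) 0)) μ :=
    ((hint a hamem).mul_const _).add (hiC.mul_const _)
  have hintg : Integrable
      (fun l => ∑ i, ∑ j, c i * c j * Real.exp (-l * min (|x i - x j|) a)) μ :=
    integrable_finset_sum _ (fun i _ => integrable_finset_sum _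
      (fun j _ => (hInt i j).const_mul _))
  have hmono := integral_mono hintf hintg (fun l => pointwiseC a ha l n x c)
  rw [hswap]
  refine le_trans ?_ hmono
  rw [integral_add ((hint a hamem).mul_const _) (hiC.mul_const _),
    integral_mul_const, integral_mul_const]
  have h1 : 0 ≤ (∫ l, Real.exp (-l * a) ∂μ) := integral_nonneg (fun l => (Real.exp_pos _).le)
  exact add_nonneg (mul_nonneg h1 (sq_nonneg _))
    (mul_nonneg hC0 (tri_posdef a ha.le n x c))

/-- Let `μ` be a finite positive Borel measure on `ℝ` whose Laplace transform
`L(μ)(t) = ∫ e^{-λt} dμ(λ)` is finite on `[0,a]`, and set `φ(t) := L(μ)(|t|)`.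
If `L(μ)` attains its minimum on `[0,a]` at `a` (equivalently `L(μ)'(a-) ≤ 0`),
then `φ` is reflection positive on `[-a,a]` and extends to a symmetric positive
definite function on all of `ℝ`. -/
theorem reflection_positive_of_laplace_min (a : ℝ) (ha : 0 < a)
    (μ : Measure ℝ) (hfin : IsFiniteMeasure μ)
    (hint : ∀ t ∈ Set.Icc (0 : ℝ) a, Integrable (fun l => Real.exp (-l * t)) μ)
    (hmin : ∀ t ∈ Set.Icc (0 : ℝ) a,
      (∫ l, Real.exp (-l * a) ∂μ) ≤ ∫ l, Real.exp (-l * t) ∂μ) :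
    ReflectionPositive a (fun t => ∫ l, Real.exp (-l * |t|) ∂μ) ∧
    ∃ g : ℝ → ℝ, (∀ t : ℝ, g (-t) = g t) ∧
      PosDefKernel (Set.univ : Set ℝ) (fun x y => g (x - y)) ∧
      ∀ t ∈ Set.Icc (-a) a, g t = ∫ l, Real.exp (-l * |t|) ∂μ := by
  haveI := hfin
  constructor
  · constructor
    · -- kernel (s,t) ↦ φ((t-s)/2) on [-a,a]
      intro n x hx c
      have key := gPD a ha μ hint hmin n (fun i => x i / 2) c
      have heq : ∀ i j : Fin n,
          (∫ l, Real.exp (-l * |(x j - x i) / 2|) ∂μ)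
            = ∫ l, Real.exp (-l * min (|x i / 2 - x j / 2|) a) ∂μ := by
        intro i j
        have h1 : |(x j - x i) / 2| = |x i / 2 - x j / 2| := by
          rw [abs_sub_comm]
          congr 1
          ring
        have h2 : |x i / 2 - x j / 2| ≤ a := by
          have hi := hx i; have hj := hx j
          rw [Set.mem_Icc] at hi hj
          rw [abs_sub_le_iff]
          constructor <;> [skip; skip] <;>
            · rcases hi with ⟨hi1, hi2⟩; rcases hj with ⟨hj1, hj2⟩; linarith
        rw [h1, min_eq_left h2]
      simp only
      calc (0:ℝ) ≤ ∑ i, ∑ j, c i * c j *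
            ∫ l, Real.exp (-l * min (|x i / 2 - x j / 2|) a) ∂μ := key
        _ = ∑ i, ∑ j, c i * c j * ∫ l, Real.exp (-l * |(x j - x i) / 2|) ∂μ := by
            apply Finset.sum_congr rfl; intro i _
            apply Finset.sum_congr rfl; intro j _
            rw [heq i j]
    · -- kernel (s,t) ↦ φ((t+s)/2) on (0,a)
      intro n x hx c
      simp only
      have hmem : ∀ i j : Fin n, (x j + x i) / 2 ∈ Set.Icc (0:ℝ) a := by
        intro i j
        have hi := hx i; have hj := hx j
        rw [Set.mem_Ioo] at hi hj
        constructor <;> [linarith [hi.1, hj.1]; linarith [hi.2, hj.2]]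
      have habs : ∀ i j : Fin n, |(x j + x i) / 2| = (x j + x i) / 2 := by
        intro i j
        exact abs_of_nonneg (hmem i j).1
      have hprod : ∀ i j : Fin n, ∀ l : ℝ,
          Real.exp (-l * |(x j + x i) / 2|)
            = Real.exp (-l * (x i / 2)) * Real.exp (-l * (x j / 2)) := by
        intro i j l
        rw [habs i j, ← Real.exp_add]
        congr 1
        ring
      have hInt : ∀ i j : Fin n,
          Integrable (fun l => Real.exp (-l * (x i / 2)) * Real.exp (-l * (x j / 2))) μ := by
        intro i j
        have := hint _ (hmem i j)
        apply this.congr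
        filter_upwards with l
        rw [← Real.exp_add]
        congr 1
        ring
      have hswap : (∑ i, ∑ j, c i * c j * ∫ l, Real.exp (-l * |(x j + x i) / 2|) ∂μ)
          = ∫ l, (∑ i, c i * Real.exp (-l * (x i / 2)))^2 ∂μ := by
        have hexpand : ∀ l : ℝ, (∑ i, c i * Real.exp (-l * (x i / 2)))^2
            = ∑ i, ∑ j, c i * c j *
                (Real.exp (-l * (x i / 2)) * Real.exp (-l * (x j / 2))) := by
          intro l
          rw [sq, Finset.sum_mul_sum]
          apply Finset.sum_congr rfl; intro i _
          apply Finset.sum_congr rfl; intro j _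
          ring
        simp_rw [hexpand]
        rw [integral_finset_sum _ (fun i _ => integrable_finset_sum _
          (fun j _ => (hInt i j).const_mul _))]
        apply Finset.sum_congr rfl; intro i _
        rw [integral_finset_sum _ (fun j _ => (hInt i j).const_mul _)]
        apply Finset.sum_congr rfl; intro j _
        rw [integral_const_mul]
        congr 1
        apply integral_congr_ae
        filter_upwards with l
        rw [hprod i j l]
      rw [hswap]
      exact integral_nonneg (fun l => sq_nonneg _)
  · -- the extension
    refine ⟨fun t => ∫ l, Real.exp (-l * min (|t|) a) ∂μ, ?_, ?_, ?_⟩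
    · intro t
      simp only [abs_neg]
    · intro n x _ c
      exact gPD a ha μ hint hmin n x c
    · intro t ht
      rw [Set.mem_Icc] at ht
      have h2 : |t| ≤ a := abs_le.2 ht
      simp only
      rw [min_eq_left h2]
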